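/- Let Y be a square-integrable real random variable with mean E[Y] = X and variance Var[Y] = a + bX + cX² with c ≠ −1, let p ∈ (0,1], and let B be a Bernoulli(p) random variable independent of Y. Define Ȳ = B·Y. Then the statistic (a·p² + b·p·Ȳ + (1 + c − p)·Ȳ²)/(1 + c) is an unbiased estimator of Var[Ȳ]: E[(a·p² + b·p·Ȳ + (1 + c − p)·Ȳ²)/(1 + c)] = Var[Ȳ]. -/

import Mathlib

open MeasureTheory ProbabilityTheory

/-- **Unbiased variance estimator under zero-inflation.**
If `Y` is square-integrable with mean `X` and variance `a + bX + cX²` with `c ≠ −1`,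
`B ~ Bernoulli(p)` is independent of `Y` with `p ∈ (0,1]`, and `Ȳ = B·Y`, then
`(ap² + bpȲ + (1 + c − p)Ȳ²)/(1 + c)` is an unbiased estimator of `Var[Ȳ]`. -/
theorem stmt10 {Ω : Type*} [MeasurableSpace Ω] (μ : Measure Ω) [IsProbabilityMeasure μ]
    (Y B : Ω → ℝ) (hY : MemLp Y 2 μ) (hYmeas : Measurable Y) (hBmeas : Measurable B)
    (a b c X p : ℝ) (hc : c ≠ -1) (hp : 0 < p) (hp1 : p ≤ 1)
    (hB01 : ∀ ω, B ω = 0 ∨ B ω = 1)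
    (hBlaw : μ {ω | B ω = 1} = ENNReal.ofReal p)
    (hindep : IndepFun B Y μ)
    (hmean : ∫ ω, Y ω ∂μ = X)
    (hvar : variance Y μ = a + b * X + c * X ^ 2) :
    ∫ ω, (a * p ^ 2 + b * p * (B ω * Y ω) + (1 + c - p) * (B ω * Y ω) ^ 2) / (1 + c) ∂μ
      = variance (fun ω => B ω * Y ω) μ := by
  have hc1 : (1 : ℝ) + c ≠ 0 := by
    intro h; apply hc; linarith
  -- B as indicator
  have hBind : B = Set.indicator {ω | B ω = 1} (fun _ => (1 : ℝ)) := by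
    funext ω
    rcases hB01 ω with h | h <;> simp [Set.indicator, h]
  have hsmeas : MeasurableSet {ω | B ω = 1} := hBmeas (measurableSet_singleton 1)
  have hEB : ∫ ω, B ω ∂μ = p := by
    have h1 : ∫ ω, B ω ∂μ = ∫ ω, Set.indicator {ω | B ω = 1} (fun _ => (1:ℝ)) ω ∂μ := by
      rw [← hBind]
    rw [h1]
    have h2 := MeasureTheory.integral_indicator_one (μ := μ) hsmeas
    simpa [Pi.one_def, measureReal_def, hBlaw, ENNReal.toReal_ofReal hp.le] using h2
  have hBsq : ∀ ω, B ω ^ 2 = B ω := by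
    intro ω; rcases hB01 ω with h | h <;> simp [h]
  -- Memℒp of B*Y
  have hBYm : AEStronglyMeasurable (fun ω => B ω * Y ω) μ :=
    (hBmeas.mul hYmeas).aestronglyMeasurable
  have hBY : MemLp (fun ω => B ω * Y ω) 2 μ := by
    refine hY.of_le hBYm (Filter.Eventually.of_forall fun ω => ?_)
    rcases hB01 ω with h | h <;> simp [h, norm_mul, abs_nonneg]
  have hYint : Integrable Y μ := hY.integrable one_le_two
  have hY2int : Integrable (fun ω => Y ω ^ 2) μ := by
    simpa [pow_two] using hY.integrable_sq
  have hBYint : Integrable (fun ω => B ω * Y ω) μ := hBY.integrable one_le_two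
  have hBY2int : Integrable (fun ω => (B ω * Y ω) ^ 2) μ := by
    simpa [pow_two] using hBY.integrable_sq
  -- E[BY] = p X
  have hEBY : ∫ ω, B ω * Y ω ∂μ = p * X := by
    have := hindep.integral_mul_eq_mul_integral hBmeas.aestronglyMeasurable hYmeas.aestronglyMeasurable
    simpa [hEB, hmean] using this
  -- E[Y²]
  have hEY2 : ∫ ω, Y ω ^ 2 ∂μ = a + b * X + c * X ^ 2 + X ^ 2 := by
    have := ProbabilityTheory.variance_eq_sub hY
    rw [hvar] at this
    have h2 : (∫ ω, (Y ^ 2) ω ∂μ) = ∫ ω, Y ω ^ 2 ∂μ := by rfl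
    rw [h2, hmean] at this
    linarith
  -- E[(BY)²] = p E[Y²]
  have hEBY2 : ∫ ω, (B ω * Y ω) ^ 2 ∂μ = p * (a + b * X + c * X ^ 2 + X ^ 2) := by
    have hind2 : IndepFun (fun ω => B ω ^ 2) (fun ω => Y ω ^ 2) μ :=
      hindep.comp (measurable_id.pow_const 2) (measurable_id.pow_const 2)
    have : ∫ ω, (B ω * Y ω) ^ 2 ∂μ = ∫ ω, (B ω ^ 2) * (Y ω ^ 2) ∂μ := by
      congr 1; funext ω; ring
    rw [this]
    have hmul := hind2.integral_mul_eq_mul_integral (hBmeas.pow_const 2).aestronglyMeasurable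
      (hYmeas.pow_const 2).aestronglyMeasurable
    have hEB2 : ∫ ω, B ω ^ 2 ∂μ = p := by
      rw [show (fun ω => B ω ^ 2) = fun ω => B ω from funext hBsq]
      exact hEB
    simpa [hEB2, hEY2] using hmul
  -- variance of BY
  have hvarBY : variance (fun ω => B ω * Y ω) μ
      = p * (a + b * X + c * X ^ 2 + X ^ 2) - (p * X) ^ 2 := by
    have := ProbabilityTheory.variance_eq_sub hBY
    have h2 : (∫ ω, ((fun ω => B ω * Y ω) ^ 2) ω ∂μ) = ∫ ω, (B ω * Y ω) ^ 2 ∂μ := rfl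
    rw [h2, hEBY2] at this
    have h3 : (∫ ω, (fun ω => B ω * Y ω) ω ∂μ) = p * X := hEBY
    rw [h3] at this
    exact this
  -- compute LHS
  rw [MeasureTheory.integral_div]
  have hsplit : ∫ ω, (a * p ^ 2 + b * p * (B ω * Y ω) + (1 + c - p) * (B ω * Y ω) ^ 2) ∂μ
      = a * p ^ 2 + b * p * (p * X) + (1 + c - p) * (p * (a + b * X + c * X ^ 2 + X ^ 2)) := by
    rw [integral_add (by exact (integrable_const _).add (hBYint.const_mul _))
      (hBY2int.const_mul _),
      integral_add (integrable_const _) (hBYint.const_mul _),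
      integral_const, integral_const_mul, integral_const_mul, hEBY, hEBY2]
    simp
  rw [hsplit, hvarBY]
  field_simp
  ring
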